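/- Let G be a graph, let (C, P) be a lollipop in G with C = v1, ..., vc, v1 and P = u1, ..., u_{ℓ+1} where u1 = vc, and suppose (C,P) is a best lollipop (no lollipop has a longer cycle, and among those with the same cycle length, none has a longer path). If the end vertex u_{ℓ+1} is adjacent to some vertex vi of C, then ℓ+1 ≤ i ≤ c-ℓ-1. -/

import Mathlib

open SimpleGraph

/-- `P'` is aligned with `P` (both starting at `x`): shared vertices appear in the
same relative order. -/
def Aligned {V : Type*} [DecidableEq V] {G : SimpleGraph V} {x a b : V}
    (P : G.Walk x a) (P' : G.Walk x b) : Prop :=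
  ∀ u v : V, u ∈ P.support → v ∈ P.support → u ∈ P'.support → v ∈ P'.support →
    P.support.idxOf u < P.support.idxOf v →
    P'.support.idxOf u < P'.support.idxOf v

/-- Two paths with common origin `x` are internally disjoint: every common vertex is a
common endpoint. -/
def IntDisjoint {V : Type*} {G : SimpleGraph V} {x a b : V}
    (P : G.Walk x a) (Q : G.Walk x b) : Prop :=
  ∀ v : V, v ∈ P.support → v ∈ Q.support → (v = x ∨ v = a) ∧ (v = x ∨ v = b)

/-- 2-connected: at least 3 vertices, connected, and no cut vertex. -/
def TwoConnected {V : Type*} [Fintype V] (G : SimpleGraph V) : Prop :=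
  3 ≤ Fintype.card V ∧ G.Connected ∧
    ∀ v : V, ((⊤ : G.Subgraph).deleteVerts {v}).coe.Connected

/-- A lollipop: a cycle `C` and a path `P` whose vertex sets meet exactly in the
vertex `a`, an endpoint of `P` lying on `C`. -/
def IsLollipop {V : Type*} {G : SimpleGraph V} {v a w : V}
    (C : G.Walk v v) (P : G.Walk a w) : Prop :=
  C.IsCycle ∧ P.IsPath ∧ a ∈ C.support ∧ ∀ u ∈ C.support, u ∈ P.support → u = a

private lemma support_getElem_eq_getVert {V : Type*} {G : SimpleGraph V} :
    ∀ {u v : V} (p : G.Walk u v) (i : ℕ) (h : i < p.support.length),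
      p.support[i] = p.getVert i := by
  intro u v p
  induction p with
  | nil => intro i h
           simp only [SimpleGraph.Walk.support_nil, List.length_singleton] at h
           interval_cases i
           simp
  | cons h q ih =>
      intro i hi
      match i with
      | 0 => simp
      | (n+1) =>
          simp only [SimpleGraph.Walk.support_cons, List.length_cons] at hi ⊢
          rw [List.getElem_cons_succ, SimpleGraph.Walk.getVert_cons_succ]
          exact ih n (by omega)

/-- For a best lollipop `(C, P)` with `C = v₁,…,v_c,v₁`, `P = u₁,…,u_{ℓ+1}`, `u₁ = v_c`:
if the end `u_{ℓ+1}` is adjacent to `vᵢ` (`1 ≤ i ≤ c-1`), then `ℓ+1 ≤ i ≤ c-ℓ-1`. -/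
theorem stmt_6 {V : Type*} {G : SimpleGraph V} {v w : V}
    (C : G.Walk v v) (P : G.Walk v w) (hL : IsLollipop C P)
    (hbest : ∀ (v' a' w' : V) (C' : G.Walk v' v') (P' : G.Walk a' w'),
      IsLollipop C' P' →
      ¬ (C.length < C'.length ∨ (C'.length = C.length ∧ P.length < P'.length)))
    (i : ℕ) (hi1 : 1 ≤ i) (hic : i ≤ C.length - 1)
    (hadj : G.Adj w (C.support.getD i v)) :
    P.length + 1 ≤ i ∧ i + P.length + 1 ≤ C.length := by
  classical
  obtain ⟨hC, hP, -, hsep⟩ := hL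
  set c := C.length with hc
  have hc3 : 3 ≤ c := hC.three_le_length
  have hslen : C.support.length = c + 1 := C.length_support
  have htlen : C.support.tail.length = c := by
    rw [List.length_tail, hslen]
    omega
  have htail : C.support.tail.Nodup := hC.support_nodup
  -- tail entries in terms of getVert
  have htg : ∀ (j : ℕ) (hj : j < c), C.support.tail[j] = C.getVert (j + 1) := by
    intro j hj
    rw [List.getElem_tail]
    exact support_getElem_eq_getVert C (j + 1) (by omega)
  -- the adjacency in terms of getVert
  have hgetD : C.support.getD i v = C.getVert i := by
    rw [List.getD_eq_getElem _ _ (by omega : i < C.support.length)]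
    exact support_getElem_eq_getVert C i (by omega)
  rw [hgetD] at hadj
  set vi := C.getVert i with hvi
  -- vi ≠ v
  have hvine : vi ≠ v := by
    intro hvv
    have h1 : C.support.tail[i - 1]'(by omega) = vi := by
      rw [htg (i - 1) (by omega)]; congr 1; omega
    have h2 : C.support.tail[c - 1]'(by omega) = v := by
      rw [htg (c - 1) (by omega)]
      have : c - 1 + 1 = c := by omega
      rw [this]
      exact C.getVert_length
    have := (htail.getElem_inj_iff).mp (h1.trans (hvv.trans h2.symm))
    omega
  have hmem : vi ∈ C.support :=
    SimpleGraph.Walk.mem_support_iff_exists_getVert.mpr ⟨i, rfl, by omega⟩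
  set Q := C.takeUntil vi hmem with hQ
  set D := C.dropUntil vi hmem with hD
  have hspec : Q.append D = C := C.take_spec hmem
  have hlensum : Q.length + D.length = c := by
    have := congrArg SimpleGraph.Walk.length hspec
    rwa [SimpleGraph.Walk.length_append] at this
  -- Q.length ≥ 1
  have hQpos : 1 ≤ Q.length := by
    by_contra h
    have h0 : Q.length = 0 := by omega
    have := Q.getVert_length
    rw [h0] at this
    simp only [SimpleGraph.Walk.getVert_zero] at this
    exact hvine this.symm
  -- Q.length < c
  have hQlt : Q.length < c := by
    have hle : Q.length ≤ c := by omega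
    rcases lt_or_eq_of_le hle with h | h
    · exact h
    · exfalso
      have hD0 : D.length = 0 := by omega
      have := D.getVert_length
      rw [hD0] at this
      simp only [SimpleGraph.Walk.getVert_zero] at this
      exact hvine this
  -- C.getVert Q.length = vi
  have hCQ : C.getVert Q.length = vi := by
    rw [← hspec, SimpleGraph.Walk.getVert_append]
    simp
  -- Q.length = i
  have hQi : Q.length = i := by
    have h1 : C.support.tail[Q.length - 1]'(by omega) = vi := by
      rw [htg (Q.length - 1) (by omega)]
      have : Q.length - 1 + 1 = Q.length := by omega
      rw [this]; exact hCQ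
    have h2 : C.support.tail[i - 1]'(by omega) = vi := by
      rw [htg (i - 1) (by omega)]; congr 1; omega
    have := (htail.getElem_inj_iff).mp (h1.trans h2.symm)
    omega
  -- handle the trivial case P.length = 0
  rcases Nat.eq_zero_or_pos P.length with hP0 | hPpos
  · constructor <;> omega
  -- now P.length ≥ 1, so w ≠ v
  have hwv : w ≠ v := by
    intro h
    subst h
    have : (⟨P, hP⟩ : G.Path w w) = SimpleGraph.Path.nil := SimpleGraph.Path.loop_eq _
    have hPnil : P = SimpleGraph.Walk.nil := congrArg Subtype.val this
    rw [hPnil] at hPpos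
    simp at hPpos
  have hwC : w ∉ C.support := fun h => hwv (hsep w h P.end_mem_support)
  have hviP : vi ∉ P.support := fun h => hvine (hsep vi hmem h)
  have hvP : v ∉ P.support.tail := by
    have := hP.support_nodup
    rw [P.support_eq_cons] at this
    exact (List.nodup_cons.mp this).1
  have hPtail : P.support.tail.Nodup := by
    have := hP.support_nodup
    rw [P.support_eq_cons] at this
    exact (List.nodup_cons.mp this).2
  -- decompose the tail of C's support
  have hCsupp : C.support.tail = Q.support.tail ++ D.support.tail := by
    rw [← hspec, SimpleGraph.Walk.tail_support_append]
  rw [hCsupp] at htail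
  obtain ⟨hQt, hDt, hdisj⟩ := List.nodup_append.mp htail
  -- v ∈ D.support.tail
  have hvD : v ∈ D.support.tail := by
    have h1 : v ∈ D.support := D.end_mem_support
    rw [D.support_eq_cons] at h1
    rcases List.mem_cons.mp h1 with h1 | h1
    · exact absurd h1.symm hvine
    · exact h1
  -- vi ∈ Q.support.tail
  have hviQ : vi ∈ Q.support.tail := by
    have h1 : vi ∈ Q.support := Q.end_mem_support
    rw [Q.support_eq_cons] at h1
    rcases List.mem_cons.mp h1 with h1 | h1
    · exact absurd h1 hvine
    · exact h1
  -- Q is a path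
  have hQpath : Q.IsPath := by
    apply SimpleGraph.Walk.IsPath.mk'
    rw [Q.support_eq_cons, List.nodup_cons]
    exact ⟨fun h => hdisj v h v hvD rfl, hQt⟩
  -- D is a path
  have hDpath : D.IsPath := by
    apply SimpleGraph.Walk.IsPath.mk'
    rw [D.support_eq_cons, List.nodup_cons]
    exact ⟨fun h => hdisj vi hviQ vi h rfl, hDt⟩
  -- common members of C's support and P's tail support: none
  have hsep' : ∀ x : V, x ∈ C.support → x ∈ P.support.tail → False := by
    intro x hx hxt
    have : x = v := hsep x hx (by rw [P.support_eq_cons]; exact List.mem_cons_of_mem _ hxt)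
    exact hvP (this ▸ hxt)
  -- edge s(w, vi) not in any walk inside C, nor in P
  have hedgeC : ∀ {x y : V} (R : G.Walk x y), R.support ⊆ C.support →
      s(w, vi) ∉ R.edges := by
    intro x y R hsub he
    exact hwC (hsub (R.fst_mem_support_of_mem_edges he))
  have hedgeP : s(w, vi) ∉ P.edges := fun he =>
    hviP (P.snd_mem_support_of_mem_edges he)
  ---- Cycle 1 : w → vi (edge), vi → v (Q reversed), v → w (P); length 1 + i + ℓ
  have hR1path : (Q.reverse.append P).IsPath := by
    apply SimpleGraph.Walk.IsPath.mk'
    rw [SimpleGraph.Walk.support_append, List.nodup_append]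
    have hQrev : Q.reverse.support.Nodup := by
      rw [SimpleGraph.Walk.support_reverse, List.nodup_reverse]
      exact hQpath.support_nodup
    refine ⟨hQrev, hPtail, ?_⟩
    intro x hx y hx' hxy
    rw [← hxy] at hx'
    rw [SimpleGraph.Walk.support_reverse, List.mem_reverse] at hx
    exact hsep' x (C.support_takeUntil_subset hmem hx) hx'
  have hR1edge : s(w, vi) ∉ (Q.reverse.append P).edges := by
    rw [SimpleGraph.Walk.edges_append, List.mem_append]
    rintro (h | h)
    · rw [SimpleGraph.Walk.edges_reverse, List.mem_reverse] at h
      exact hedgeC Q (C.support_takeUntil_subset hmem) h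
    · exact hedgeP h
  have hcyc1 : (SimpleGraph.Walk.cons hadj (Q.reverse.append P)).IsCycle :=
    (SimpleGraph.Walk.cons_isCycle_iff _ hadj).mpr ⟨hR1path, hR1edge⟩
  have hlol1 : IsLollipop (SimpleGraph.Walk.cons hadj (Q.reverse.append P))
      (SimpleGraph.Walk.nil : G.Walk w w) := by
    refine ⟨hcyc1, SimpleGraph.Walk.IsPath.nil, SimpleGraph.Walk.start_mem_support _, ?_⟩
    intro u _ hu
    simpa using hu
  have h1 := hbest w w w _ _ hlol1
  push_neg at h1
  have hlen1 : (SimpleGraph.Walk.cons hadj (Q.reverse.append P)).length =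
      i + P.length + 1 := by
    simp [SimpleGraph.Walk.length_cons, SimpleGraph.Walk.length_append,
      SimpleGraph.Walk.length_reverse, hQi]
  have hineq1 : i + P.length + 1 ≤ c := by
    have := h1.1
    omega
  ---- Cycle 2 : w → vi (edge), vi → v (D), v → w (P); length 1 + (c - i) + ℓ
  have hR2path : (D.append P).IsPath := by
    apply SimpleGraph.Walk.IsPath.mk'
    rw [SimpleGraph.Walk.support_append, List.nodup_append]
    refine ⟨hDpath.support_nodup, hPtail, ?_⟩
    intro x hx y hx' hxy
    rw [← hxy] at hx'
    exact hsep' x (C.support_dropUntil_subset hmem hx) hx'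
  have hR2edge : s(w, vi) ∉ (D.append P).edges := by
    rw [SimpleGraph.Walk.edges_append, List.mem_append]
    rintro (h | h)
    · exact hedgeC D (C.support_dropUntil_subset hmem) h
    · exact hedgeP h
  have hcyc2 : (SimpleGraph.Walk.cons hadj (D.append P)).IsCycle :=
    (SimpleGraph.Walk.cons_isCycle_iff _ hadj).mpr ⟨hR2path, hR2edge⟩
  have hlol2 : IsLollipop (SimpleGraph.Walk.cons hadj (D.append P))
      (SimpleGraph.Walk.nil : G.Walk w w) := by
    refine ⟨hcyc2, SimpleGraph.Walk.IsPath.nil, SimpleGraph.Walk.start_mem_support _, ?_⟩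
    intro u _ hu
    simpa using hu
  have h2 := hbest w w w _ _ hlol2
  push_neg at h2
  have hlen2 : (SimpleGraph.Walk.cons hadj (D.append P)).length =
      D.length + P.length + 1 := by
    simp [SimpleGraph.Walk.length_cons, SimpleGraph.Walk.length_append]
  have hineq2 : D.length + P.length + 1 ≤ c := by
    have := h2.1
    omega
  constructor
  · omega
  · exact hineq1
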